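/- For SAGA-RR with step size μ > 0, the backward inner difference in epoch t ≥ 2 satisfies Σ_{i=1}^{N−1} E‖w_N^{t−1} − w_i^{t−1}‖² ≤ 5δ²μ²N² ( Σ_{i=1}^{N−1} E‖w_i^{t−1} − w_0^{t−1}‖² + Σ_{i=1}^{N−1} E‖w_N^{t−2} − w_i^{t−2}‖² ) + 3δ²μ²N³ E‖w̃_0^{t−1}‖². -/

import Mathlib

open MeasureTheory ProbabilityTheory Finset
open scoped RealInnerProductSpace ENNReal

/-
Setup: SAGA under random reshuffling (SAGA-RR).
`σp t` is the uniformly distributed random permutation of epoch `t` (0-based: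
`σp t ω i` is the sample index σ^t(i+1) selected at iteration `i` of epoch `t`);
`w t i ω` is the iterate w_i^t and `φv t i n ω` the history variable φ_{i,n}^t.
`Qg n` is the gradient of the loss w ↦ Q(w; x_n), δ its Lipschitz constant,
ν the strong-convexity constant of J = (1/N)∑ₙ Q(·; xₙ), and `wstar` the
minimizer of J.
-/


private lemma saga_sq_key {a b c r : ℝ} :
    (a + b + c + r) ^ 2 ≤ 5 * (a ^ 2 + b ^ 2 + c ^ 2) + 6 * r ^ 2 := by
  nlinarith [sq_nonneg (a - b), sq_nonneg (a - c), sq_nonneg (b - c),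
    sq_nonneg (3 * a - 5 * r), sq_nonneg (3 * b - 5 * r), sq_nonneg (3 * c - 5 * r)]

private lemma saga_sum_shift (f : ℕ → ℝ) {N : ℕ} (hN : 1 ≤ N) :
    ∑ j ∈ Finset.range N, f (j + 1) = (∑ j ∈ Finset.Ico 1 N, f j) + f N := by
  have h1 : ∑ j ∈ Finset.Ico 1 (N + 1), f j = ∑ j ∈ Finset.range N, f (1 + j) := by
    rw [Finset.sum_Ico_eq_sum_range]; simp
  rw [show (∑ j ∈ Finset.range N, f (j + 1)) = ∑ j ∈ Finset.range N, f (1 + j) from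
    Finset.sum_congr rfl fun j _ => by rw [Nat.add_comm], ← h1, Finset.sum_Ico_succ_top hN]

private lemma saga_sum_pi {N : ℕ} (hN : 1 ≤ N) (f : ℕ → ℝ) (hfN : f N = 0)
    (π : Equiv.Perm (Fin N)) :
    ∑ m : Fin N, f ((π m : ℕ) + 1) = ∑ j ∈ Finset.Ico 1 N, f j := by
  rw [Equiv.sum_comp π (fun k : Fin N => f ((k : ℕ) + 1)),
    Fin.sum_univ_eq_sum_range (fun k => f (k + 1)) N, saga_sum_shift f hN, hfN, add_zero]

private lemma saga_tele {E : Type*} [AddCommGroup E] (f : ℕ → E) {i N : ℕ} (h : i ≤ N) :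
    f i - f N = ∑ j ∈ Finset.Ico i N, (f j - f (j + 1)) := by
  rw [Finset.sum_Ico_eq_sub _ h, Finset.sum_range_sub' f, Finset.sum_range_sub' f]
  abel

private lemma saga_phi_formula
    {M N : ℕ} {Ω : Type}
    (σp : ℕ → Ω → Equiv.Perm (Fin N))
    (w : ℕ → ℕ → Ω → EuclideanSpace ℝ (Fin M))
    (φv : ℕ → ℕ → Fin N → Ω → EuclideanSpace ℝ (Fin M))
    (hφrec1 : ∀ (t : ℕ) (i : Fin N) (ω : Ω),
      φv t ((i : ℕ) + 1) (σp t ω i) ω = w t ((i : ℕ) + 1) ω)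
    (hφrec2 : ∀ (t : ℕ) (i : Fin N) (m : Fin N) (ω : Ω), m ≠ σp t ω i →
      φv t ((i : ℕ) + 1) m ω = φv t (i : ℕ) m ω)
    (t : ℕ) (ω : Ω) :
    ∀ j, j ≤ N → ∀ m : Fin N, φv t j m ω =
      if ((((σp t ω).symm m : Fin N)) : ℕ) < j then
        w t ((((σp t ω).symm m : Fin N) : ℕ) + 1) ω
      else φv t 0 m ω := by
  intro j
  induction j with
  | zero => intro _ m; simp
  | succ j ih =>
    intro hj m
    have hjN : j < N := hj
    by_cases hm : m = σp t ω ⟨j, hjN⟩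
    · have hsymm : ((σp t ω).symm m) = ⟨j, hjN⟩ := by rw [hm]; simp
      rw [hm]
      rw [show φv t (j + 1) (σp t ω ⟨j, hjN⟩) ω = w t (j + 1) ω from hφrec1 t ⟨j, hjN⟩ ω]
      rw [← hm, hsymm, if_pos (by simp)]
    · have h2 : φv t (j + 1) m ω = φv t j m ω := hφrec2 t ⟨j, hjN⟩ m ω hm
      rw [h2, ih (le_of_lt hj) m]
      have hne : (((σp t ω).symm m : Fin N) : ℕ) ≠ j := by
        intro hc
        apply hm
        have : (σp t ω).symm m = ⟨j, hjN⟩ := Fin.ext hc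
        rw [← this]; simp
      by_cases hc : (((σp t ω).symm m : Fin N) : ℕ) < j
      · rw [if_pos hc, if_pos (by omega)]
      · rw [if_neg hc, if_neg (by omega)]

private lemma saga_gauss {N : ℕ} (hN : 1 ≤ N) :
    (∑ i ∈ Finset.Ico 1 N, ((N - i : ℕ) : ℝ)) ≤ (N : ℝ) ^ 2 / 2 := by
  have h1 : ∑ i ∈ Finset.Ico 1 N, (N - i) = ∑ i ∈ Finset.range N, i := by
    have h2 : ∑ i ∈ Finset.Ico 0 N, (N - i) = (N - 0) + ∑ i ∈ Finset.Ico 1 N, (N - i) :=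
      Finset.sum_eq_sum_Ico_succ_bot hN _
    have h3 : ∑ i ∈ Finset.range N, (N - i) = ∑ i ∈ Finset.range N, (i + 1) := by
      rw [← Finset.sum_range_reflect (fun j => N - j) N]
      refine Finset.sum_congr rfl fun j hj => ?_
      have := Finset.mem_range.mp hj; omega
    rw [Finset.sum_add_distrib, Finset.sum_const, Finset.card_range, smul_eq_mul, mul_one,
      Finset.range_eq_Ico] at h3
    rw [Finset.range_eq_Ico]
    omega
  have h2 : (∑ i ∈ Finset.range N, (i : ℝ)) * 2 = (N : ℝ) * ((N : ℝ) - 1) := by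
    have hc := congrArg (Nat.cast : ℕ → ℝ) (Finset.sum_range_id_mul_two N)
    push_cast [Nat.cast_sub hN] at hc
    linarith [hc]
  have h4 : (∑ i ∈ Finset.Ico 1 N, ((N - i : ℕ) : ℝ)) = ∑ i ∈ Finset.range N, (i : ℝ) := by
    rw [show (∑ i ∈ Finset.Ico 1 N, ((N - i : ℕ) : ℝ)) = ((∑ i ∈ Finset.Ico 1 N, (N - i) : ℕ) : ℝ)
      from by push_cast; rfl, h1]
    push_cast; rfl
  rw [h4]
  nlinarith [Nat.cast_nonneg (α := ℝ) N]

set_option maxHeartbeats 1600000 in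
private lemma saga_pointwise
    {M N : ℕ} (hN : 1 ≤ N) {Ω : Type}
    (σp : ℕ → Ω → Equiv.Perm (Fin N))
    (Qg : Fin N → EuclideanSpace ℝ (Fin M) → EuclideanSpace ℝ (Fin M))
    (δ : ℝ) (hδ : 0 < δ)
    (hLip : ∀ n x y, ‖Qg n x - Qg n y‖ ≤ δ * ‖x - y‖)
    (wstar : EuclideanSpace ℝ (Fin M))
    (hstar : ∑ n, Qg n wstar = 0)
    (μ : ℝ) (hμpos : 0 < μ)
    (w : ℕ → ℕ → Ω → EuclideanSpace ℝ (Fin M))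
    (φv : ℕ → ℕ → Fin N → Ω → EuclideanSpace ℝ (Fin M))
    (hwrec : ∀ (t : ℕ) (i : Fin N) (ω : Ω),
      w t ((i : ℕ) + 1) ω = w t (i : ℕ) ω - μ •
        (Qg (σp t ω i) (w t (i : ℕ) ω) - Qg (σp t ω i) (φv t (i : ℕ) (σp t ω i) ω)
          + (N : ℝ)⁻¹ • ∑ m, Qg m (φv t (i : ℕ) m ω)))
    (hφrec1 : ∀ (t : ℕ) (i : Fin N) (ω : Ω),
      φv t ((i : ℕ) + 1) (σp t ω i) ω = w t ((i : ℕ) + 1) ω)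
    (hφrec2 : ∀ (t : ℕ) (i : Fin N) (m : Fin N) (ω : Ω), m ≠ σp t ω i →
      φv t ((i : ℕ) + 1) m ω = φv t (i : ℕ) m ω)
    (hwepoch : ∀ (t : ℕ) (ω : Ω), w (t + 1) 0 ω = w t N ω)
    (hφepoch : ∀ (t : ℕ) (m : Fin N) (ω : Ω), φv (t + 1) 0 m ω = φv t N m ω)
    (u : ℕ) (ω : Ω) :
    ∑ i ∈ Finset.Ico 1 N, ‖w (u + 1) N ω - w (u + 1) i ω‖ ^ 2 ≤
      5 * δ ^ 2 * μ ^ 2 * (N : ℝ) ^ 2 *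
          ((∑ i ∈ Finset.Ico 1 N, ‖w (u + 1) i ω - w (u + 1) 0 ω‖ ^ 2) +
            ∑ i ∈ Finset.Ico 1 N, ‖w u N ω - w u i ω‖ ^ 2) +
        3 * δ ^ 2 * μ ^ 2 * (N : ℝ) ^ 3 * ‖wstar - w (u + 1) 0 ω‖ ^ 2 := by
  have hNpos : (0 : ℝ) < N := by exact_mod_cast hN
  set σ1 : Equiv.Perm (Fin N) := σp (u + 1) ω with hσ1
  set σ0 : Equiv.Perm (Fin N) := σp u ω with hσ0
  set d : ℕ → ℝ := fun k => ‖w (u + 1) k ω - w (u + 1) 0 ω‖ with hd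
  set e : ℕ → ℝ := fun k => ‖w u N ω - w u k ω‖ with he
  set r : ℝ := ‖wstar - w (u + 1) 0 ω‖ with hr
  have hd0 : ∀ k, 0 ≤ d k := fun k => norm_nonneg _
  have he0 : ∀ k, 0 ≤ e k := fun k => norm_nonneg _
  have hr0 : 0 ≤ r := norm_nonneg _
  have heN : e N = 0 := by rw [he]; simp
  have hd00 : d 0 = 0 := by rw [hd]; simp
  set SF : ℝ := ∑ i ∈ Finset.Ico 1 N, d i ^ 2 with hSF
  set SB : ℝ := ∑ i ∈ Finset.Ico 1 N, e i ^ 2 with hSB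
  have hSF0 : 0 ≤ SF := Finset.sum_nonneg fun i _ => sq_nonneg _
  have hSB0 : 0 ≤ SB := Finset.sum_nonneg fun i _ => sq_nonneg _
  have w0eq : w (u + 1) 0 ω = w u N ω := hwepoch u ω
  -- the φ formula for epoch u+1, with epoch-u history as fallback
  have phi0 : ∀ m : Fin N, φv (u + 1) 0 m ω = w u (((σ0.symm m : Fin N) : ℕ) + 1) ω := by
    intro m
    rw [hφepoch u m ω,
      saga_phi_formula σp w φv hφrec1 hφrec2 u ω N le_rfl m,
      if_pos ((σ0.symm m).isLt)]
  have phiF : ∀ j, j ≤ N → ∀ m : Fin N, φv (u + 1) j m ω =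
      if (((σ1.symm m : Fin N)) : ℕ) < j then w (u + 1) (((σ1.symm m : Fin N) : ℕ) + 1) ω
      else w u (((σ0.symm m : Fin N) : ℕ) + 1) ω := by
    intro j hj m
    rw [saga_phi_formula σp w φv hφrec1 hφrec2 (u + 1) ω j hj m]
    by_cases hc : (((σ1.symm m : Fin N)) : ℕ) < j
    · rw [if_pos hc, if_pos hc]
    · rw [if_neg hc, if_neg hc, phi0 m]
  set cc : ℕ → Fin N → ℝ := fun j m =>
    if (((σ1.symm m : Fin N)) : ℕ) < j then d (((σ1.symm m : Fin N) : ℕ) + 1)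
    else e (((σ0.symm m : Fin N) : ℕ) + 1) with hcc
  have hcc0 : ∀ j m, 0 ≤ cc j m := by
    intro j m
    by_cases h : (((σ1.symm m : Fin N)) : ℕ) < j
    · rw [hcc]; dsimp only; rw [if_pos h]; exact hd0 _
    · rw [hcc]; dsimp only; rw [if_neg h]; exact he0 _
  -- distance of history variables to wstar
  have hpsi : ∀ j, j ≤ N → ∀ m : Fin N, ‖φv (u + 1) j m ω - wstar‖ ≤ cc j m + r := by
    intro j hj m
    rw [phiF j hj m, hcc]
    dsimp only
    by_cases h : (((σ1.symm m : Fin N)) : ℕ) < j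
    · rw [if_pos h, if_pos h]
      set k := ((σ1.symm m : Fin N) : ℕ) + 1
      have h3 : w (u + 1) k ω - wstar =
          (w (u + 1) k ω - w (u + 1) 0 ω) + (w (u + 1) 0 ω - wstar) := by abel
      rw [h3]
      refine (norm_add_le _ _).trans ?_
      rw [hd, hr]
      dsimp only
      rw [norm_sub_rev wstar]
    · rw [if_neg h, if_neg h]
      set k := ((σ0.symm m : Fin N) : ℕ) + 1
      have h3 : w u k ω - wstar = -(w u N ω - w u k ω) + (w (u + 1) 0 ω - wstar) := by
        rw [w0eq]; abel
      rw [h3]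
      refine (norm_add_le _ _).trans ?_
      rw [norm_neg, he, hr]
      dsimp only
      rw [norm_sub_rev wstar]
  -- the increments
  set G : ℕ → EuclideanSpace ℝ (Fin M) := fun j => w (u + 1) j ω - w (u + 1) (j + 1) ω with hG
  have hGbound : ∀ j, ∀ hj : j < N,
      ‖G j‖ ≤ μ * (δ * (d j + e (((σ0.symm (σ1 ⟨j, hj⟩) : Fin N) : ℕ) + 1) +
        ((N : ℝ)⁻¹ * ∑ m, cc j m) + r)) := by
    intro j hj
    set n : Fin N := σ1 ⟨j, hj⟩ with hn
    have hrec := hwrec (u + 1) ⟨j, hj⟩ ω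
    simp only [Fin.val_mk, ← hσ1, ← hn] at hrec
    have hGj : G j = μ • (Qg n (w (u + 1) j ω) - Qg n (φv (u + 1) j n ω)
        + (N : ℝ)⁻¹ • ∑ m, Qg m (φv (u + 1) j m ω)) := by
      rw [hG]
      dsimp only
      rw [hrec]
      abel
    rw [hGj, norm_smul, Real.norm_eq_abs, abs_of_pos hμpos]
    have hA : ‖Qg n (w (u + 1) j ω) - Qg n (φv (u + 1) j n ω)‖ ≤
        δ * (d j + e (((σ0.symm n : Fin N) : ℕ) + 1)) := by
      have hphin : φv (u + 1) j n ω = w u (((σ0.symm n : Fin N) : ℕ) + 1) ω := by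
        rw [phiF j (le_of_lt hj) n]
        have : σ1.symm n = ⟨j, hj⟩ := by rw [hn]; simp
        rw [this, if_neg (by simp)]
      refine (hLip n _ _).trans ?_
      have h4 : w (u + 1) j ω - φv (u + 1) j n ω =
          (w (u + 1) j ω - w (u + 1) 0 ω) + (w u N ω - w u (((σ0.symm n : Fin N) : ℕ) + 1) ω) := by
        rw [hphin, ← w0eq]; abel
      rw [h4]
      have h5 := norm_add_le (w (u + 1) j ω - w (u + 1) 0 ω)
        (w u N ω - w u (((σ0.symm n : Fin N) : ℕ) + 1) ω)
      rw [hd, he]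
      dsimp only
      nlinarith [h5, hδ.le]
    have hB : ‖(N : ℝ)⁻¹ • ∑ m, Qg m (φv (u + 1) j m ω)‖ ≤
        δ * (((N : ℝ)⁻¹ * ∑ m, cc j m) + r) := by
      have hsum0 : ∑ m, Qg m (φv (u + 1) j m ω) =
          ∑ m, (Qg m (φv (u + 1) j m ω) - Qg m wstar) := by
        rw [Finset.sum_sub_distrib, hstar, sub_zero]
      rw [hsum0, norm_smul, Real.norm_eq_abs, abs_of_pos (by positivity : (0:ℝ) < (N : ℝ)⁻¹)]
      have h6 : ‖∑ m, (Qg m (φv (u + 1) j m ω) - Qg m wstar)‖ ≤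
          ∑ m, (δ * (cc j m + r)) := by
        refine (norm_sum_le _ _).trans (Finset.sum_le_sum fun m _ => ?_)
        refine (hLip m _ _).trans ?_
        have := hpsi j (le_of_lt hj) m
        nlinarith [this, hδ.le]
      have h7 : ∑ m, (δ * (cc j m + r)) = δ * ((∑ m, cc j m) + N * r) := by
        rw [← Finset.mul_sum, Finset.sum_add_distrib, Finset.sum_const, Finset.card_univ,
          Fintype.card_fin, nsmul_eq_mul]
      have h8 : (0:ℝ) ≤ ∑ m, cc j m := Finset.sum_nonneg fun m _ => hcc0 j m
      calc (N : ℝ)⁻¹ * ‖∑ m, (Qg m (φv (u + 1) j m ω) - Qg m wstar)‖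
          ≤ (N : ℝ)⁻¹ * (δ * ((∑ m, cc j m) + N * r)) := by
            refine mul_le_mul_of_nonneg_left (h6.trans (le_of_eq h7)) (by positivity)
        _ = δ * (((N : ℝ)⁻¹ * ∑ m, cc j m) + r) := by
            have hNinv : (N : ℝ)⁻¹ * (N : ℝ) = 1 := inv_mul_cancel₀ (ne_of_gt hNpos)
            linear_combination (δ * r) * hNinv
    calc μ * ‖Qg n (w (u + 1) j ω) - Qg n (φv (u + 1) j n ω)
          + (N : ℝ)⁻¹ • ∑ m, Qg m (φv (u + 1) j m ω)‖
        ≤ μ * (‖Qg n (w (u + 1) j ω) - Qg n (φv (u + 1) j n ω)‖ +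
            ‖(N : ℝ)⁻¹ • ∑ m, Qg m (φv (u + 1) j m ω)‖) :=
          mul_le_mul_of_nonneg_left (norm_add_le _ _) hμpos.le
      _ ≤ μ * ((δ * (d j + e (((σ0.symm n : Fin N) : ℕ) + 1))) +
            δ * (((N : ℝ)⁻¹ * ∑ m, cc j m) + r)) :=
          mul_le_mul_of_nonneg_left (add_le_add hA hB) hμpos.le
      _ = μ * (δ * (d j + e (((σ0.symm n : Fin N) : ℕ) + 1) +
            ((N : ℝ)⁻¹ * ∑ m, cc j m) + r)) := by ring
  have hNinv : (N : ℝ)⁻¹ * (N : ℝ) = 1 := inv_mul_cancel₀ (ne_of_gt hNpos)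
  set eK : ℕ → ℝ := fun j =>
    if h : j < N then e (((σ0.symm (σ1 ⟨j, h⟩) : Fin N) : ℕ) + 1) else 0 with heK
  set A : ℕ → ℝ := fun j => (N : ℝ)⁻¹ * ∑ m, cc j m with hA2
  have hGsq : ∀ j, j < N →
      ‖G j‖ ^ 2 ≤ μ ^ 2 * δ ^ 2 * (5 * (d j ^ 2 + eK j ^ 2 + A j ^ 2) + 6 * r ^ 2) := by
    intro j hj
    have heKj : eK j = e (((σ0.symm (σ1 ⟨j, hj⟩) : Fin N) : ℕ) + 1) := by
      rw [heK]; dsimp only; rw [dif_pos hj]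
    have hb : ‖G j‖ ≤ μ * (δ * (d j + eK j + A j + r)) := by
      rw [heKj, hA2]; exact hGbound j hj
    have h1 : ‖G j‖ ^ 2 ≤ (μ * (δ * (d j + eK j + A j + r))) ^ 2 :=
      pow_le_pow_left₀ (norm_nonneg _) hb 2
    have h3 := saga_sq_key (a := d j) (b := eK j) (c := A j) (r := r)
    calc ‖G j‖ ^ 2 ≤ (μ * (δ * (d j + eK j + A j + r))) ^ 2 := h1
      _ = μ ^ 2 * δ ^ 2 * (d j + eK j + A j + r) ^ 2 := by ring
      _ ≤ μ ^ 2 * δ ^ 2 * (5 * (d j ^ 2 + eK j ^ 2 + A j ^ 2) + 6 * r ^ 2) :=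
          mul_le_mul_of_nonneg_left h3 (by positivity)
  have hdsum : ∑ j ∈ Finset.range N, d j ^ 2 = SF := by
    rw [Finset.range_eq_Ico, Finset.sum_eq_sum_Ico_succ_bot hN (fun j => d j ^ 2), hd00, hSF]
    norm_num
  have heKsum : ∑ j ∈ Finset.range N, eK j ^ 2 = SB := by
    rw [← Fin.sum_univ_eq_sum_range (fun j => eK j ^ 2) N]
    have h1 : ∀ i : Fin N, eK (i : ℕ) ^ 2 =
        (fun k : ℕ => e k ^ 2) ((((σ1.trans σ0.symm) i : Fin N) : ℕ) + 1) := by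
      intro i
      rw [heK]; dsimp only
      rw [dif_pos i.isLt]
      congr 2
    rw [Finset.sum_congr rfl (fun i _ => h1 i)]
    exact saga_sum_pi hN (fun k => e k ^ 2) (by simp [heN]) (σ1.trans σ0.symm)
  have hccsum : ∀ j, j < N → (∑ m, cc j m ^ 2) ≤ SF + SB := by
    intro j hj
    set F : ℕ → ℝ := fun k => if k < N then d k ^ 2 else 0 with hF2
    have hFN : F N = 0 := by rw [hF2]; simp
    have hbound : ∀ m : Fin N, cc j m ^ 2 ≤
        F (((σ1.symm m : Fin N) : ℕ) + 1) + (fun k : ℕ => e k ^ 2) (((σ0.symm m : Fin N) : ℕ) + 1) := by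
      intro m
      by_cases h : ((σ1.symm m : Fin N) : ℕ) < j
      · rw [hcc]; dsimp only; rw [if_pos h, hF2]; dsimp only
        rw [if_pos (by omega : ((σ1.symm m : Fin N) : ℕ) + 1 < N)]
        exact le_add_of_nonneg_right (sq_nonneg _)
      · rw [hcc]; dsimp only; rw [if_neg h]
        refine le_add_of_nonneg_left ?_
        rw [hF2]; dsimp only
        split
        · exact sq_nonneg _
        · exact le_rfl
    calc (∑ m, cc j m ^ 2)
        ≤ ∑ m, (F (((σ1.symm m : Fin N) : ℕ) + 1) +
            (fun k : ℕ => e k ^ 2) (((σ0.symm m : Fin N) : ℕ) + 1)) :=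
          Finset.sum_le_sum (fun m _ => hbound m)
      _ = (∑ m, F (((σ1.symm m : Fin N) : ℕ) + 1)) +
            ∑ m, (fun k : ℕ => e k ^ 2) (((σ0.symm m : Fin N) : ℕ) + 1) :=
          Finset.sum_add_distrib
      _ = SF + SB := by
          rw [saga_sum_pi hN F hFN σ1.symm,
            saga_sum_pi hN (fun k => e k ^ 2) (by simp [heN]) σ0.symm]
          congr 1
          rw [hSF]
          refine Finset.sum_congr rfl fun k hk => ?_
          rw [hF2]; dsimp only
          rw [if_pos (Finset.mem_Ico.mp hk).2]
  have hAsum : ∀ j, j < N → A j ^ 2 ≤ (N : ℝ)⁻¹ * (SF + SB) := by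
    intro j hj
    have h1 : (∑ m, cc j m) ^ 2 ≤ (N : ℝ) * ∑ m, cc j m ^ 2 := by
      have h2 := sq_sum_le_card_mul_sum_sq (s := (Finset.univ : Finset (Fin N))) (f := cc j)
      simpa [Finset.card_univ] using h2
    rw [hA2]; dsimp only
    rw [mul_pow]
    calc ((N : ℝ)⁻¹) ^ 2 * (∑ m, cc j m) ^ 2
        ≤ ((N : ℝ)⁻¹) ^ 2 * ((N : ℝ) * (SF + SB)) := by
          refine mul_le_mul_of_nonneg_left ?_ (by positivity)
          exact h1.trans (mul_le_mul_of_nonneg_left (hccsum j hj) hNpos.le)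
      _ = (N : ℝ)⁻¹ * (SF + SB) := by
          linear_combination ((N : ℝ)⁻¹ * (SF + SB)) * hNinv
  have hT : ∑ j ∈ Finset.range N, ‖G j‖ ^ 2 ≤
      μ ^ 2 * δ ^ 2 * (10 * (SF + SB) + 6 * N * r ^ 2) := by
    have h4 : ∑ j ∈ Finset.range N, ‖G j‖ ^ 2 ≤
        ∑ j ∈ Finset.range N, (μ ^ 2 * δ ^ 2 * 5 * (d j ^ 2 + eK j ^ 2) +
          (μ ^ 2 * δ ^ 2 * 5 * ((N : ℝ)⁻¹ * (SF + SB)) + μ ^ 2 * δ ^ 2 * 6 * r ^ 2)) := by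
      refine Finset.sum_le_sum fun j hj => ?_
      have hj' := Finset.mem_range.mp hj
      have h1 := hGsq j hj'
      have h2 := mul_le_mul_of_nonneg_left (hAsum j hj')
        (by positivity : (0 : ℝ) ≤ μ ^ 2 * δ ^ 2 * 5)
      nlinarith [h1, h2]
    have h5 : ∑ j ∈ Finset.range N, (μ ^ 2 * δ ^ 2 * 5 * (d j ^ 2 + eK j ^ 2) +
        (μ ^ 2 * δ ^ 2 * 5 * ((N : ℝ)⁻¹ * (SF + SB)) + μ ^ 2 * δ ^ 2 * 6 * r ^ 2)) =
        μ ^ 2 * δ ^ 2 * 5 * (SF + SB) +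
          (N : ℝ) * (μ ^ 2 * δ ^ 2 * 5 * ((N : ℝ)⁻¹ * (SF + SB)) + μ ^ 2 * δ ^ 2 * 6 * r ^ 2) := by
      rw [Finset.sum_add_distrib, Finset.sum_const, Finset.card_range, nsmul_eq_mul,
        ← Finset.mul_sum, Finset.sum_add_distrib, hdsum, heKsum]
    refine h4.trans (le_of_eq ?_)
    rw [h5]
    linear_combination (μ ^ 2 * δ ^ 2 * 5 * (SF + SB)) * hNinv
  have hmain : ∀ i ∈ Finset.Ico 1 N, ‖w (u + 1) N ω - w (u + 1) i ω‖ ^ 2 ≤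
      ((N - i : ℕ) : ℝ) * ∑ j ∈ Finset.range N, ‖G j‖ ^ 2 := by
    intro i hi
    obtain ⟨hi1, hiN⟩ := Finset.mem_Ico.mp hi
    have htel : w (u + 1) i ω - w (u + 1) N ω = ∑ j ∈ Finset.Ico i N, G j := by
      rw [hG]; exact saga_tele (fun j => w (u + 1) j ω) (le_of_lt hiN)
    have h1 : ‖w (u + 1) N ω - w (u + 1) i ω‖ = ‖∑ j ∈ Finset.Ico i N, G j‖ := by
      rw [← htel, norm_sub_rev]
    rw [h1]
    calc ‖∑ j ∈ Finset.Ico i N, G j‖ ^ 2 ≤ (∑ j ∈ Finset.Ico i N, ‖G j‖) ^ 2 :=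
        pow_le_pow_left₀ (norm_nonneg _) (norm_sum_le _ _) 2
      _ ≤ (#(Finset.Ico i N) : ℝ) * ∑ j ∈ Finset.Ico i N, ‖G j‖ ^ 2 :=
        sq_sum_le_card_mul_sum_sq
      _ ≤ ((N - i : ℕ) : ℝ) * ∑ j ∈ Finset.range N, ‖G j‖ ^ 2 := by
          rw [Nat.card_Ico]
          refine mul_le_mul_of_nonneg_left ?_ (Nat.cast_nonneg _)
          refine Finset.sum_le_sum_of_subset_of_nonneg ?_ (fun j _ _ => sq_nonneg _)
          rw [Finset.range_eq_Ico]
          exact Finset.Ico_subset_Ico (Nat.zero_le i) le_rfl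
  have hT0 : (0 : ℝ) ≤ ∑ j ∈ Finset.range N, ‖G j‖ ^ 2 :=
    Finset.sum_nonneg fun j _ => sq_nonneg _
  calc ∑ i ∈ Finset.Ico 1 N, ‖w (u + 1) N ω - w (u + 1) i ω‖ ^ 2
      ≤ ∑ i ∈ Finset.Ico 1 N, ((N - i : ℕ) : ℝ) * ∑ j ∈ Finset.range N, ‖G j‖ ^ 2 :=
        Finset.sum_le_sum hmain
    _ = (∑ i ∈ Finset.Ico 1 N, ((N - i : ℕ) : ℝ)) * ∑ j ∈ Finset.range N, ‖G j‖ ^ 2 := by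
        rw [Finset.sum_mul]
    _ ≤ ((N : ℝ) ^ 2 / 2) * ∑ j ∈ Finset.range N, ‖G j‖ ^ 2 :=
        mul_le_mul_of_nonneg_right (saga_gauss hN) hT0
    _ ≤ ((N : ℝ) ^ 2 / 2) * (μ ^ 2 * δ ^ 2 * (10 * (SF + SB) + 6 * N * r ^ 2)) :=
        mul_le_mul_of_nonneg_left hT (by positivity)
    _ = 5 * δ ^ 2 * μ ^ 2 * (N : ℝ) ^ 2 * (SF + SB) +
        3 * δ ^ 2 * μ ^ 2 * (N : ℝ) ^ 3 * r ^ 2 := by ring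
    _ ≤ 5 * δ ^ 2 * μ ^ 2 * (N : ℝ) ^ 2 *
          ((∑ i ∈ Finset.Ico 1 N, ‖w (u + 1) i ω - w (u + 1) 0 ω‖ ^ 2) +
            ∑ i ∈ Finset.Ico 1 N, ‖w u N ω - w u i ω‖ ^ 2) +
        3 * δ ^ 2 * μ ^ 2 * (N : ℝ) ^ 3 * ‖wstar - w (u + 1) 0 ω‖ ^ 2 := by
        simp only [hSF, hSB, hr, hd, he]
        exact le_rfl

private lemma saga_integrable_sq
    {Ω : Type} [MeasurableSpace Ω] (P : Measure Ω) [IsFiniteMeasure P]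
    {M' : ℕ} {h h' : Ω → EuclideanSpace ℝ (Fin M')}
    (hm : Measurable h) (hm' : Measurable h') {C C' : ℝ}
    (hb : ∀ ω, ‖h ω‖ ≤ C) (hb' : ∀ ω, ‖h' ω‖ ≤ C') :
    Integrable (fun ω => ‖h ω - h' ω‖ ^ 2) P := by
  have hmeas : Measurable fun ω => ‖h ω - h' ω‖ ^ 2 := ((hm.sub hm').norm).pow_const 2
  refine (integrable_const ((C + C') ^ 2)).mono' hmeas.aestronglyMeasurable
    (ae_of_all _ fun ω => ?_)
  have h1 : ‖h ω - h' ω‖ ≤ C + C' := (norm_sub_le _ _).trans (add_le_add (hb ω) (hb' ω))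
  have h0 : (0 : ℝ) ≤ ‖h ω - h' ω‖ := norm_nonneg _
  rw [Real.norm_eq_abs, abs_of_nonneg (by positivity)]
  exact pow_le_pow_left₀ h0 h1 2



private lemma saga_w_factor
    {M N : ℕ} {Ω : Type}
    (σp : ℕ → Ω → Equiv.Perm (Fin N))
    (Qg : Fin N → EuclideanSpace ℝ (Fin M) → EuclideanSpace ℝ (Fin M))
    (μ : ℝ)
    (w : ℕ → ℕ → Ω → EuclideanSpace ℝ (Fin M))
    (φv : ℕ → ℕ → Fin N → Ω → EuclideanSpace ℝ (Fin M))
    (hw00 : ∀ ω, w 0 0 ω = 0)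
    (hφ00 : ∀ n ω, Qg n (φv 0 0 n ω) = 0)
    (hwrec : ∀ (t : ℕ) (i : Fin N) (ω : Ω),
      w t ((i : ℕ) + 1) ω = w t (i : ℕ) ω - μ •
        (Qg (σp t ω i) (w t (i : ℕ) ω) - Qg (σp t ω i) (φv t (i : ℕ) (σp t ω i) ω)
          + (N : ℝ)⁻¹ • ∑ m, Qg m (φv t (i : ℕ) m ω)))
    (hφrec1 : ∀ (t : ℕ) (i : Fin N) (ω : Ω),
      φv t ((i : ℕ) + 1) (σp t ω i) ω = w t ((i : ℕ) + 1) ω)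
    (hφrec2 : ∀ (t : ℕ) (i : Fin N) (m : Fin N) (ω : Ω), m ≠ σp t ω i →
      φv t ((i : ℕ) + 1) m ω = φv t (i : ℕ) m ω)
    (hwepoch : ∀ (t : ℕ) (ω : Ω), w (t + 1) 0 ω = w t N ω)
    (hφepoch : ∀ (t : ℕ) (m : Fin N) (ω : Ω), φv (t + 1) 0 m ω = φv t N m ω) :
    ∀ t i, i ≤ N →
      ∃ (f : (Fin (t + 1) → Equiv.Perm (Fin N)) → EuclideanSpace ℝ (Fin M))
        (g : (Fin (t + 1) → Equiv.Perm (Fin N)) → Fin N → EuclideanSpace ℝ (Fin M)),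
        (∀ ω, w t i ω = f (fun k => σp (k : ℕ) ω)) ∧
        (∀ ω m, Qg m (φv t i m ω) = g (fun k => σp (k : ℕ) ω) m) := by
  have step : ∀ t i (hi : i < N),
      (∃ (f : (Fin (t + 1) → Equiv.Perm (Fin N)) → EuclideanSpace ℝ (Fin M))
        (g : (Fin (t + 1) → Equiv.Perm (Fin N)) → Fin N → EuclideanSpace ℝ (Fin M)),
        (∀ ω, w t i ω = f (fun k => σp (k : ℕ) ω)) ∧
        (∀ ω m, Qg m (φv t i m ω) = g (fun k => σp (k : ℕ) ω) m)) →
      (∃ (f : (Fin (t + 1) → Equiv.Perm (Fin N)) → EuclideanSpace ℝ (Fin M))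
        (g : (Fin (t + 1) → Equiv.Perm (Fin N)) → Fin N → EuclideanSpace ℝ (Fin M)),
        (∀ ω, w t (i + 1) ω = f (fun k => σp (k : ℕ) ω)) ∧
        (∀ ω m, Qg m (φv t (i + 1) m ω) = g (fun k => σp (k : ℕ) ω) m)) := by
    rintro t i hi ⟨f, g, hf, hg⟩
    set F : (Fin (t + 1) → Equiv.Perm (Fin N)) → EuclideanSpace ℝ (Fin M) := fun p =>
      f p - μ • (Qg (p (Fin.last t) ⟨i, hi⟩) (f p) - g p (p (Fin.last t) ⟨i, hi⟩)
        + (N : ℝ)⁻¹ • ∑ m, g p m) with hF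
    have hlast : ∀ ω, (fun k : Fin (t + 1) => σp (k : ℕ) ω) (Fin.last t) = σp t ω := by
      intro ω; simp [Fin.val_last]
    have hwnew : ∀ ω, w t (i + 1) ω = F (fun k => σp (k : ℕ) ω) := by
      intro ω
      have h1 := hwrec t ⟨i, hi⟩ ω
      simp only [Fin.val_mk] at h1
      rw [h1]
      simp only [hF, hlast ω, ← hf ω, ← hg ω]
    refine ⟨F, fun p m => if m = p (Fin.last t) ⟨i, hi⟩ then Qg m (F p) else g p m,
      hwnew, fun ω m => ?_⟩
    simp only [hlast ω]
    by_cases hm : m = σp t ω ⟨i, hi⟩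
    · rw [if_pos hm, hm]
      have h2 := hφrec1 t ⟨i, hi⟩ ω
      simp only [Fin.val_mk] at h2
      rw [h2, hwnew ω]
    · rw [if_neg hm]
      have h2 := hφrec2 t ⟨i, hi⟩ m ω hm
      simp only [Fin.val_mk] at h2
      rw [h2, hg ω m]
  intro t
  induction t with
  | zero =>
    intro i
    induction i with
    | zero =>
      exact fun _ => ⟨fun _ => 0, fun _ _ => 0, fun ω => hw00 ω, fun ω m => hφ00 m ω⟩
    | succ i ih =>
      intro hi
      exact step 0 i (by omega) (ih (by omega))
  | succ t iht =>
    intro i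
    induction i with
    | zero =>
      intro _
      obtain ⟨f, g, hf, hg⟩ := iht N le_rfl
      refine ⟨fun p => f (fun k => p k.castSucc), fun p => g (fun k => p k.castSucc),
        fun ω => ?_, fun ω m => ?_⟩
      · rw [hwepoch t ω, hf ω]
        congr 1
      · rw [hφepoch t m ω, hg ω m]
        congr 1
    | succ i ih =>
      intro hi
      exact step (t + 1) i (by omega) (ih (by omega))

private lemma saga_w_meas_bdd
    {M N : ℕ} {Ω : Type} [MeasurableSpace Ω]
    (σp : ℕ → Ω → Equiv.Perm (Fin N))
    (hσmeas : ∀ t, @Measurable Ω (Equiv.Perm (Fin N)) _ ⊤ (σp t))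
    (Qg : Fin N → EuclideanSpace ℝ (Fin M) → EuclideanSpace ℝ (Fin M))
    (μ : ℝ)
    (w : ℕ → ℕ → Ω → EuclideanSpace ℝ (Fin M))
    (φv : ℕ → ℕ → Fin N → Ω → EuclideanSpace ℝ (Fin M))
    (hw00 : ∀ ω, w 0 0 ω = 0)
    (hφ00 : ∀ n ω, Qg n (φv 0 0 n ω) = 0)
    (hwrec : ∀ (t : ℕ) (i : Fin N) (ω : Ω),
      w t ((i : ℕ) + 1) ω = w t (i : ℕ) ω - μ •
        (Qg (σp t ω i) (w t (i : ℕ) ω) - Qg (σp t ω i) (φv t (i : ℕ) (σp t ω i) ω)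
          + (N : ℝ)⁻¹ • ∑ m, Qg m (φv t (i : ℕ) m ω)))
    (hφrec1 : ∀ (t : ℕ) (i : Fin N) (ω : Ω),
      φv t ((i : ℕ) + 1) (σp t ω i) ω = w t ((i : ℕ) + 1) ω)
    (hφrec2 : ∀ (t : ℕ) (i : Fin N) (m : Fin N) (ω : Ω), m ≠ σp t ω i →
      φv t ((i : ℕ) + 1) m ω = φv t (i : ℕ) m ω)
    (hwepoch : ∀ (t : ℕ) (ω : Ω), w (t + 1) 0 ω = w t N ω)
    (hφepoch : ∀ (t : ℕ) (m : Fin N) (ω : Ω), φv (t + 1) 0 m ω = φv t N m ω) :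
    ∀ t i, i ≤ N → Measurable (w t i) ∧ ∃ C, ∀ ω, ‖w t i ω‖ ≤ C := by
  intro t i hi
  obtain ⟨f, g, hf, -⟩ := saga_w_factor σp Qg μ w φv hw00 hφ00 hwrec hφrec1 hφrec2
    hwepoch hφepoch t i hi
  letI : MeasurableSpace (Equiv.Perm (Fin N)) := ⊤
  haveI : MeasurableSingletonClass (Equiv.Perm (Fin N)) :=
    ⟨fun _ => MeasurableSpace.measurableSet_top⟩
  have hΦ : Measurable (fun ω (k : Fin (t + 1)) => σp (k : ℕ) ω) :=
    measurable_pi_lambda _ (fun k => hσmeas k)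
  have hweq : w t i = fun ω => f (fun k => σp (k : ℕ) ω) := funext hf
  constructor
  · rw [hweq]
    exact (measurable_of_countable f).comp hΦ
  · obtain ⟨C, hC⟩ := (Set.finite_range fun p => ‖f p‖).bddAbove
    exact ⟨C, fun ω => by rw [hweq]; exact hC (Set.mem_range_self _)⟩

theorem stmt_4
    {M N : ℕ} (hM : 1 ≤ M) (hN : 1 ≤ N)
    {Ω : Type} [MeasurableSpace Ω] (P : Measure Ω) [IsProbabilityMeasure P]
    (σp : ℕ → Ω → Equiv.Perm (Fin N))
    (hσmeas : ∀ t, @Measurable Ω (Equiv.Perm (Fin N)) _ ⊤ (σp t))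
    (hσunif : ∀ t (π : Equiv.Perm (Fin N)),
      P {ω | σp t ω = π} = ((Nat.factorial N : ℝ≥0∞))⁻¹)
    (hσindep : iIndepFun (m := fun _ : ℕ => (⊤ : MeasurableSpace (Equiv.Perm (Fin N)))) σp P)
    (Q : Fin N → EuclideanSpace ℝ (Fin M) → ℝ)
    (Qg : Fin N → EuclideanSpace ℝ (Fin M) → EuclideanSpace ℝ (Fin M))
    (δ ν : ℝ) (hδ : 0 < δ) (hν : 0 < ν)
    (hQdiff : ∀ n x, HasGradientAt (Q n) (Qg n x) x)
    (hQconv : ∀ n, ConvexOn ℝ Set.univ (Q n))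
    (hLip : ∀ n x y, ‖Qg n x - Qg n y‖ ≤ δ * ‖x - y‖)
    (hSC : ∀ x y : EuclideanSpace ℝ (Fin M),
      ν * ‖x - y‖ ^ 2 ≤ ⟪((N : ℝ)⁻¹ • ∑ n, Qg n x) - ((N : ℝ)⁻¹ • ∑ n, Qg n y), x - y⟫)
    (wstar : EuclideanSpace ℝ (Fin M))
    (hstar : ∑ n, Qg n wstar = 0)
    (μ : ℝ) (hμpos : 0 < μ)
    (w : ℕ → ℕ → Ω → EuclideanSpace ℝ (Fin M))
    (φv : ℕ → ℕ → Fin N → Ω → EuclideanSpace ℝ (Fin M))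
    (hw00 : ∀ ω, w 0 0 ω = 0)
    (hφ00 : ∀ n ω, Qg n (φv 0 0 n ω) = 0)
    (hwrec : ∀ (t : ℕ) (i : Fin N) (ω : Ω),
      w t ((i : ℕ) + 1) ω = w t (i : ℕ) ω - μ •
        (Qg (σp t ω i) (w t (i : ℕ) ω) - Qg (σp t ω i) (φv t (i : ℕ) (σp t ω i) ω)
          + (N : ℝ)⁻¹ • ∑ m, Qg m (φv t (i : ℕ) m ω)))
    (hφrec1 : ∀ (t : ℕ) (i : Fin N) (ω : Ω),
      φv t ((i : ℕ) + 1) (σp t ω i) ω = w t ((i : ℕ) + 1) ω)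
    (hφrec2 : ∀ (t : ℕ) (i : Fin N) (m : Fin N) (ω : Ω), m ≠ σp t ω i →
      φv t ((i : ℕ) + 1) m ω = φv t (i : ℕ) m ω)
    (hwepoch : ∀ (t : ℕ) (ω : Ω), w (t + 1) 0 ω = w t N ω)
    (hφepoch : ∀ (t : ℕ) (m : Fin N) (ω : Ω), φv (t + 1) 0 m ω = φv t N m ω)
    :
    -- Backward inner-difference bound.
    ∀ t : ℕ, 2 ≤ t →
      ∑ i ∈ Finset.Ico 1 N, ∫ ω, ‖w (t - 1) N ω - w (t - 1) i ω‖ ^ 2 ∂P ≤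
        5 * δ ^ 2 * μ ^ 2 * N ^ 2 *
            ((∑ i ∈ Finset.Ico 1 N, ∫ ω, ‖w (t - 1) i ω - w (t - 1) 0 ω‖ ^ 2 ∂P) +
              ∑ i ∈ Finset.Ico 1 N, ∫ ω, ‖w (t - 2) N ω - w (t - 2) i ω‖ ^ 2 ∂P) +
          3 * δ ^ 2 * μ ^ 2 * N ^ 3 * ∫ ω, ‖wstar - w (t - 1) 0 ω‖ ^ 2 ∂P := by
  intro t ht
  obtain ⟨u, rfl⟩ : ∃ u, t = u + 2 := ⟨t - 2, by omega⟩
  have he1 : u + 2 - 1 = u + 1 := by omega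
  have he2 : u + 2 - 2 = u := by omega
  rw [he1, he2]
  have hwmb := saga_w_meas_bdd σp hσmeas Qg μ w φv hw00 hφ00 hwrec hφrec1 hφrec2
    hwepoch hφepoch
  have hInt : ∀ a b c : ℕ, b ≤ N → c ≤ N →
      Integrable (fun ω => ‖w a b ω - w a c ω‖ ^ 2) P := by
    intro a b c hb hc
    obtain ⟨mb, Cb, hCb⟩ := hwmb a b hb
    obtain ⟨mc, Cc, hCc⟩ := hwmb a c hc
    exact saga_integrable_sq P mb mc hCb hCc
  have hIntStar : Integrable (fun ω => ‖wstar - w (u + 1) 0 ω‖ ^ 2) P := by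
    obtain ⟨mc, Cc, hCc⟩ := hwmb (u + 1) 0 (Nat.zero_le N)
    exact saga_integrable_sq P measurable_const mc (fun ω => le_refl ‖wstar‖) hCc
  have hIntL : ∀ i ∈ Finset.Ico 1 N,
      Integrable (fun ω => ‖w (u + 1) N ω - w (u + 1) i ω‖ ^ 2) P :=
    fun i hi => hInt (u + 1) N i le_rfl (le_of_lt (Finset.mem_Ico.mp hi).2)
  have hIntF : ∀ i ∈ Finset.Ico 1 N,
      Integrable (fun ω => ‖w (u + 1) i ω - w (u + 1) 0 ω‖ ^ 2) P :=
    fun i hi => hInt (u + 1) i 0 (le_of_lt (Finset.mem_Ico.mp hi).2) (Nat.zero_le N)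
  have hIntB : ∀ i ∈ Finset.Ico 1 N,
      Integrable (fun ω => ‖w u N ω - w u i ω‖ ^ 2) P :=
    fun i hi => hInt u N i le_rfl (le_of_lt (Finset.mem_Ico.mp hi).2)
  have hadd : Integrable (fun ω => (∑ i ∈ Finset.Ico 1 N, ‖w (u + 1) i ω - w (u + 1) 0 ω‖ ^ 2) +
      ∑ i ∈ Finset.Ico 1 N, ‖w u N ω - w u i ω‖ ^ 2) P :=
    (integrable_finset_sum _ hIntF).add (integrable_finset_sum _ hIntB)
  have hI1 : Integrable (fun ω => 5 * δ ^ 2 * μ ^ 2 * (N : ℝ) ^ 2 *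
      ((∑ i ∈ Finset.Ico 1 N, ‖w (u + 1) i ω - w (u + 1) 0 ω‖ ^ 2) +
        ∑ i ∈ Finset.Ico 1 N, ‖w u N ω - w u i ω‖ ^ 2)) P :=
    Integrable.const_mul hadd _
  have hI2 : Integrable (fun ω => 3 * δ ^ 2 * μ ^ 2 * (N : ℝ) ^ 3 *
      ‖wstar - w (u + 1) 0 ω‖ ^ 2) P := Integrable.const_mul hIntStar _
  have hR : Integrable (fun ω => 5 * δ ^ 2 * μ ^ 2 * (N : ℝ) ^ 2 *
      ((∑ i ∈ Finset.Ico 1 N, ‖w (u + 1) i ω - w (u + 1) 0 ω‖ ^ 2) +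
        ∑ i ∈ Finset.Ico 1 N, ‖w u N ω - w u i ω‖ ^ 2) +
      3 * δ ^ 2 * μ ^ 2 * (N : ℝ) ^ 3 * ‖wstar - w (u + 1) 0 ω‖ ^ 2) P := hI1.add hI2
  calc ∑ i ∈ Finset.Ico 1 N, ∫ ω, ‖w (u + 1) N ω - w (u + 1) i ω‖ ^ 2 ∂P
      = ∫ ω, ∑ i ∈ Finset.Ico 1 N, ‖w (u + 1) N ω - w (u + 1) i ω‖ ^ 2 ∂P :=
        (integral_finset_sum _ hIntL).symm
    _ ≤ ∫ ω, (5 * δ ^ 2 * μ ^ 2 * (N : ℝ) ^ 2 *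
          ((∑ i ∈ Finset.Ico 1 N, ‖w (u + 1) i ω - w (u + 1) 0 ω‖ ^ 2) +
            ∑ i ∈ Finset.Ico 1 N, ‖w u N ω - w u i ω‖ ^ 2) +
          3 * δ ^ 2 * μ ^ 2 * (N : ℝ) ^ 3 * ‖wstar - w (u + 1) 0 ω‖ ^ 2) ∂P :=
        integral_mono (integrable_finset_sum _ hIntL) hR
          (fun ω => saga_pointwise hN σp Qg δ hδ hLip wstar hstar μ hμpos w φv
            hwrec hφrec1 hφrec2 hwepoch hφepoch u ω)
    _ = 5 * δ ^ 2 * μ ^ 2 * (N : ℝ) ^ 2 *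
          ((∑ i ∈ Finset.Ico 1 N, ∫ ω, ‖w (u + 1) i ω - w (u + 1) 0 ω‖ ^ 2 ∂P) +
            ∑ i ∈ Finset.Ico 1 N, ∫ ω, ‖w u N ω - w u i ω‖ ^ 2 ∂P) +
        3 * δ ^ 2 * μ ^ 2 * (N : ℝ) ^ 3 * ∫ ω, ‖wstar - w (u + 1) 0 ω‖ ^ 2 ∂P := by
        rw [integral_add hI1 hI2, integral_const_mul, integral_const_mul,
          integral_add (integrable_finset_sum _ hIntF) (integrable_finset_sum _ hIntB),
          integral_finset_sum _ hIntF, integral_finset_sum _ hIntB]
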